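/- Let H ∈ ℝ^{d×d} be symmetric with all eigenvalues in [μ, L], 0 < μ ≤ L, let α > 0, β ∈ ℝ, and let A = [[I − α(1+β)H, β²I], [−αH, βI]] ∈ ℝ^{2d×2d}. Then the spectral (operator 2-) norm of A satisfies ‖A‖ ≤ R(α, β) = max_{λ ∈ [μ, L]} R_λ(α, β). -/

import Mathlib

open Matrix

/-- The spectral (operator 2-) norm of a real matrix, i.e. its largest singular value:
the operator norm of the induced linear map between Euclidean spaces. -/
noncomputable def spectralNorm2 {m n : Type*} [Fintype m] [Fintype n] [DecidableEq n]
    (A : Matrix m n ℝ) : ℝ :=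
  ‖LinearMap.toContinuousLinearMap (Matrix.toEuclideanLin A)‖

/-- `C_λ(α, β)`. -/
noncomputable def Clam (α β lam : ℝ) : ℝ :=
  (1 - α * (1 + β) * lam) ^ 2 + α ^ 2 * lam ^ 2 + β ^ 2 * (β ^ 2 + 1)

/-- `R_λ(α, β) = (1/√2)(C_λ + √(C_λ² − 4β²(1−αλ)²))^{1/2}`. -/
noncomputable def Rlam (α β lam : ℝ) : ℝ :=
  (1 / Real.sqrt 2) *
    Real.sqrt (Clam α β lam +
      Real.sqrt ((Clam α β lam) ^ 2 - 4 * β ^ 2 * (1 - α * lam) ^ 2))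

lemma quad_bound (p q r s w u v : ℝ) (hw0 : 0 ≤ w)
    (hw2 : w^2 = (p-q)^2 + 4*r^2) (hs : 2*s = p + q + w) :
    p*u^2 + 2*(r*(u*v)) + q*v^2 ≤ s*(u^2+v^2) := by
  have hsp : 0 ≤ s - p := by nlinarith [sq_nonneg r, sq_nonneg (w + (p - q))]
  have hsq : 0 ≤ s - q := by nlinarith [sq_nonneg r, sq_nonneg (w + (q - p))]
  have hprod : (s-p)*(s-q) = r^2 := by nlinarith [hw2]
  set t1 : ℝ := Real.sqrt (s-p) with ht1
  set t2 : ℝ := Real.sqrt (s-q) with ht2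
  have ht1sq : t1^2 = s - p := Real.sq_sqrt hsp
  have ht2sq : t2^2 = s - q := Real.sq_sqrt hsq
  have ht12 : t1 * t2 = |r| := by
    rw [ht1, ht2, ← Real.sqrt_mul hsp, hprod, Real.sqrt_sq_eq_abs]
  have h1 : 2 * (r * (u*v)) ≤ 2 * (t1*t2) * (abs u * abs v) := by
    rw [ht12]
    have : r * (u*v) ≤ |r| * (abs u * abs v) := by
      calc r * (u*v) ≤ |r * (u*v)| := le_abs_self _
      _ = |r| * (abs u * abs v) := by rw [abs_mul, abs_mul]
    linarith
  have h2 : 2*(t1*t2)*(abs u * abs v) ≤ t1^2*u^2 + t2^2*v^2 := by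
    nlinarith [sq_nonneg (t1*abs u - t2*abs v), sq_abs u, sq_abs v]
  have h6 : 2*(r*(u*v)) ≤ (s-p)*u^2 + (s-q)*v^2 := by
    rw [← ht1sq, ← ht2sq]; linarith
  nlinarith [h6]

lemma sv_bound (a b c e u v s : ℝ)
    (hs : 2*s = (a^2+b^2+c^2+e^2) +
      Real.sqrt ((a^2+b^2+c^2+e^2)^2 - 4*(a*e-b*c)^2)) :
    (a*u+b*v)^2 + (c*u+e*v)^2 ≤ s*(u^2+v^2) := by
  have hΔ : 0 ≤ (a^2+b^2+c^2+e^2)^2 - 4*(a*e-b*c)^2 := by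
    have h1 : (a^2+b^2+c^2+e^2)^2 - 4*(a*e-b*c)^2
        = ((a-e)^2+(b+c)^2) * ((a+e)^2+(b-c)^2) := by ring
    rw [h1]; positivity
  have hw2 : (Real.sqrt ((a^2+b^2+c^2+e^2)^2 - 4*(a*e-b*c)^2))^2
      = ((a^2+c^2)-(b^2+e^2))^2 + 4*(a*b+c*e)^2 := by
    rw [Real.sq_sqrt hΔ]; ring
  have := quad_bound (a^2+c^2) (b^2+e^2) (a*b+c*e) s
    (Real.sqrt ((a^2+b^2+c^2+e^2)^2 - 4*(a*e-b*c)^2)) u v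
    (Real.sqrt_nonneg _) hw2 (by linarith)
  calc (a*u+b*v)^2 + (c*u+e*v)^2
      = (a^2+c^2)*u^2 + 2*((a*b+c*e)*(u*v)) + (b^2+e^2)*v^2 := by ring
    _ ≤ s*(u^2+v^2) := this

lemma Rlam_nonneg (α β lam : ℝ) : 0 ≤ Rlam α β lam := by
  unfold Rlam; positivity

lemma two_Rlam_sq (α β lam : ℝ) :
    2 * (Rlam α β lam)^2 = Clam α β lam +
      Real.sqrt ((Clam α β lam)^2 - 4*β^2*(1-α*lam)^2) := by
  have hC : 0 ≤ Clam α β lam := by unfold Clam; positivity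
  have harg : 0 ≤ Clam α β lam +
      Real.sqrt ((Clam α β lam)^2 - 4*β^2*(1-α*lam)^2) :=
    add_nonneg hC (Real.sqrt_nonneg _)
  unfold Rlam
  rw [mul_pow, div_pow, one_pow, Real.sq_sqrt (by norm_num : (0:ℝ) ≤ 2),
    Real.sq_sqrt harg]
  ring

lemma Rlam_key (α β lam u v : ℝ) :
    ((1 - α*(1+β)*lam)*u + β^2*v)^2 + ((-(α*lam))*u + β*v)^2
      ≤ (Rlam α β lam)^2 * (u^2+v^2) := by
  apply sv_bound (1 - α*(1+β)*lam) (β^2) (-(α*lam)) β u v ((Rlam α β lam)^2)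
  have h1 : ((1 - α*(1+β)*lam)^2+(β^2)^2+(-(α*lam))^2+β^2)
      = Clam α β lam := by unfold Clam; ring
  have h2 : (((1 - α*(1+β)*lam)^2+(β^2)^2+(-(α*lam))^2+β^2)^2
      - 4*((1 - α*(1+β)*lam)*β-β^2*(-(α*lam)))^2)
      = (Clam α β lam)^2 - 4*β^2*(1-α*lam)^2 := by unfold Clam; ring
  rw [h2, h1]
  have := two_Rlam_sq α β lam
  linarith

lemma sumSq_mulVec_unitary {d : ℕ} {U : Matrix (Fin d) (Fin d) ℝ}
    (hU : U ∈ Matrix.unitaryGroup (Fin d) ℝ) (y : Fin d → ℝ) :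
    ∑ i, ((U *ᵥ y) i) ^ 2 = ∑ i, (y i) ^ 2 := by
  have h1 : ∀ z : Fin d → ℝ, ∑ i, (z i) ^ 2 = z ⬝ᵥ z := by
    intro z; simp [dotProduct, sq]
  rw [h1, h1]
  have hUtU : Uᵀ * U = 1 := by
    rw [← Matrix.conjTranspose_eq_transpose_of_trivial, ← Matrix.star_eq_conjTranspose]
    exact Matrix.mem_unitaryGroup_iff'.mp hU
  calc (U *ᵥ y) ⬝ᵥ (U *ᵥ y) = ((U *ᵥ y) ᵥ* U) ⬝ᵥ y := Matrix.dotProduct_mulVec _ _ _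
    _ = y ⬝ᵥ y := by
        rw [← Matrix.vecMul_transpose, Matrix.vecMul_vecMul, hUtU, Matrix.vecMul_one]

/-- For `H` symmetric with all eigenvalues in `[μ, L]` and
`A = [[I − α(1+β)H, β²I], [−αH, βI]]`, the spectral norm of `A` satisfies
`‖A‖ ≤ R(α, β) = max_{λ ∈ [μ, L]} R_λ(α, β)`. -/
theorem stmt15 {d : ℕ} (μ L α β : ℝ) (hμ : 0 < μ) (hμL : μ ≤ L) (hα : 0 < α)
    (H : Matrix (Fin d) (Fin d) ℝ) (hsymm : H.IsSymm)
    (hspec : spectrum ℝ H ⊆ Set.Icc μ L)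
    (A : Matrix (Fin d ⊕ Fin d) (Fin d ⊕ Fin d) ℝ)
    (hA : A = Matrix.fromBlocks (1 - (α * (1 + β)) • H) ((β ^ 2) • 1)
      (-(α • H)) (β • 1)) :
    spectralNorm2 A ≤ sSup ((fun lam => Rlam α β lam) '' Set.Icc μ L) := by
  set R : ℝ := sSup ((fun lam => Rlam α β lam) '' Set.Icc μ L) with hRdef
  have hcont : Continuous (fun lam => Rlam α β lam) := by
    unfold Rlam Clam; fun_prop
  have hbdd : BddAbove ((fun lam => Rlam α β lam) '' Set.Icc μ L) :=
    (isCompact_Icc.image hcont).bddAbove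
  have hle : ∀ lam ∈ Set.Icc μ L, Rlam α β lam ≤ R := fun lam h =>
    le_csSup hbdd ⟨lam, h, rfl⟩
  have hR0 : 0 ≤ R := le_trans (Rlam_nonneg α β μ) (hle μ ⟨le_refl μ, hμL⟩)
  -- spectral decomposition of H
  have hH : H.IsHermitian := by
    rw [Matrix.IsHermitian, Matrix.conjTranspose_eq_transpose_of_trivial]; exact hsymm
  set U : Matrix (Fin d) (Fin d) ℝ := (hH.eigenvectorUnitary : Matrix (Fin d) (Fin d) ℝ)
    with hUdef
  have hU : U ∈ Matrix.unitaryGroup (Fin d) ℝ := hH.eigenvectorUnitary.2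
  set ev : Fin d → ℝ := hH.eigenvalues with hev
  have hevm : ∀ i, ev i ∈ Set.Icc μ L := fun i => hspec (hH.eigenvalues_mem_spectrum_real i)
  have hDg : Matrix.diagonal (RCLike.ofReal ∘ ev) = Matrix.diagonal ev := by
    rw [RCLike.ofReal_real_eq_id, Function.id_comp]
  have hst : H = U * Matrix.diagonal ev * star U := by
    have h := hH.spectral_theorem
    rw [hDg] at h
    exact h
  have hHU : ∀ z : Fin d → ℝ, H *ᵥ (U *ᵥ z) = U *ᵥ (fun i => ev i * z i) := by
    intro z
    rw [hst, Matrix.mulVec_mulVec, mul_assoc (U * Matrix.diagonal ev) (star U) U,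
      Matrix.mem_unitaryGroup_iff'.mp hU, mul_one, ← Matrix.mulVec_mulVec]
    refine congrArg (fun w => U *ᵥ w) ?_
    funext i
    exact Matrix.mulVec_diagonal ev z i
  -- pointwise bound
  have key : ∀ x : EuclideanSpace ℝ (Fin d ⊕ Fin d),
      ‖(Matrix.toEuclideanLin A) x‖ ≤ R * ‖x‖ := by
    intro x
    set u : Fin d → ℝ := fun i => x (Sum.inl i) with hu
    set v : Fin d → ℝ := fun i => x (Sum.inr i) with hv
    set p : Fin d → ℝ := star U *ᵥ u with hp
    set q : Fin d → ℝ := star U *ᵥ v with hq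
    have hUU : U * star U = 1 := Matrix.mem_unitaryGroup_iff.mp hU
    have hup : u = U *ᵥ p := by
      rw [hp, Matrix.mulVec_mulVec, hUU, Matrix.one_mulVec]
    have hvq : v = U *ᵥ q := by
      rw [hq, Matrix.mulVec_mulVec, hUU, Matrix.one_mulVec]
    have hsU : star U ∈ Matrix.unitaryGroup (Fin d) ℝ := Unitary.star_mem hU
    have hxe : (WithLp.equiv 2 ((Fin d ⊕ Fin d) → ℝ)) x = Sum.elim u v := by
      funext j; cases j <;> rfl
    set pt : Fin d → ℝ := fun i => (1 - α*(1+β)*ev i) * p i + β^2 * q i with hpt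
    set pb : Fin d → ℝ := fun i => (-(α*ev i)) * p i + β * q i with hpb
    have htop : u - (α*(1+β)) • (H *ᵥ u) + (β^2 : ℝ) • v = U *ᵥ pt := by
      rw [hup, hvq, hHU, ← Matrix.mulVec_smul, ← Matrix.mulVec_smul,
        ← Matrix.mulVec_sub, ← Matrix.mulVec_add]
      refine congrArg (fun w => U *ᵥ w) ?_
      funext i
      simp only [hpt, Pi.add_apply, Pi.sub_apply, Pi.smul_apply, smul_eq_mul]
      ring
    have hbot : -(α • (H *ᵥ u)) + (β : ℝ) • v = U *ᵥ pb := by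
      rw [hup, hvq, hHU, ← Matrix.mulVec_smul, ← Matrix.mulVec_smul,
        ← Matrix.mulVec_neg, ← Matrix.mulVec_add]
      refine congrArg (fun w => U *ᵥ w) ?_
      funext i
      simp only [hpb, Pi.add_apply, Pi.neg_apply, Pi.smul_apply, smul_eq_mul]
      ring
    have hblock : A *ᵥ Sum.elim u v = Sum.elim (U *ᵥ pt) (U *ᵥ pb) := by
      rw [hA, Matrix.fromBlocks_mulVec]
      simp only [Matrix.sub_mulVec, Matrix.one_mulVec, Matrix.smul_mulVec,
        Matrix.neg_mulVec, Sum.elim_comp_inl, Sum.elim_comp_inr]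
      rw [htop.symm, hbot.symm]
    have hsum : ∑ j : Fin d ⊕ Fin d, ((A *ᵥ Sum.elim u v) j)^2
        ≤ R^2 * (∑ i, (u i)^2 + ∑ i, (v i)^2) := by
      rw [hblock, Fintype.sum_sum_type]
      simp only [Sum.elim_inl, Sum.elim_inr]
      rw [sumSq_mulVec_unitary hU pt, sumSq_mulVec_unitary hU pb]
      have hpu : ∑ i, (p i)^2 = ∑ i, (u i)^2 := sumSq_mulVec_unitary hsU u
      have hqv : ∑ i, (q i)^2 = ∑ i, (v i)^2 := sumSq_mulVec_unitary hsU v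
      calc ∑ i, (pt i)^2 + ∑ i, (pb i)^2
          = ∑ i, ((pt i)^2 + (pb i)^2) := by rw [Finset.sum_add_distrib]
        _ ≤ ∑ i, R^2 * ((p i)^2 + (q i)^2) := by
            refine Finset.sum_le_sum fun i _ => ?_
            have h := Rlam_key α β (ev i) (p i) (q i)
            have h2 : (Rlam α β (ev i))^2 ≤ R^2 := by
              have ha := hle (ev i) (hevm i)
              have hb := Rlam_nonneg α β (ev i)
              nlinarith
            have hnn : (0:ℝ) ≤ (p i)^2 + (q i)^2 := by positivity
            calc (pt i)^2 + (pb i)^2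
                = ((1 - α*(1+β)*ev i)*(p i) + β^2*(q i))^2
                  + ((-(α*ev i))*(p i) + β*(q i))^2 := rfl
              _ ≤ (Rlam α β (ev i))^2 * ((p i)^2+(q i)^2) := h
              _ ≤ R^2 * ((p i)^2 + (q i)^2) :=
                  mul_le_mul_of_nonneg_right h2 hnn
        _ = R^2 * (∑ i, (p i)^2 + ∑ i, (q i)^2) := by
            rw [← Finset.mul_sum, Finset.sum_add_distrib]
        _ = R^2 * (∑ i, (u i)^2 + ∑ i, (v i)^2) := by rw [hpu, hqv]
    have hxnorm : ‖x‖ = Real.sqrt (∑ i, (u i)^2 + ∑ i, (v i)^2) := by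
      rw [EuclideanSpace.norm_eq]
      congr 1
      rw [Fintype.sum_sum_type]
      congr 1 <;> refine Finset.sum_congr rfl fun j _ => ?_ <;>
        rw [Real.norm_eq_abs, sq_abs]
    calc ‖(Matrix.toEuclideanLin A) x‖
        = Real.sqrt (∑ j : Fin d ⊕ Fin d, ((A *ᵥ Sum.elim u v) j)^2) := by
          rw [Matrix.toEuclideanLin_apply, (show x.ofLp = Sum.elim u v from hxe), EuclideanSpace.norm_eq]
          congr 1
          refine Finset.sum_congr rfl fun j _ => ?_
          rw [PiLp.toLp_apply, Real.norm_eq_abs, sq_abs]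
      _ ≤ Real.sqrt (R^2 * (∑ i, (u i)^2 + ∑ i, (v i)^2)) := Real.sqrt_le_sqrt hsum
      _ = R * Real.sqrt (∑ i, (u i)^2 + ∑ i, (v i)^2) := by
          rw [Real.sqrt_mul (sq_nonneg R), Real.sqrt_sq hR0]
      _ = R * ‖x‖ := by rw [hxnorm]
  unfold spectralNorm2
  refine ContinuousLinearMap.opNorm_le_bound _ hR0 fun x => ?_
  simpa using key x
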